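/- arXiv:1606.00707 — 6 statements merged into one kernel-verified Lean document; each statement's English description precedes it below -/
import Mathlib

section
/- Let V be a finite-dimensional complex vector space with a nondegenerate symmetric or antisymmetric bilinear form, and let 𝔤 = 𝔤(V) be the Lie algebra of endomorphisms antisymmetric with respect to the form. Then the trace pairing (A,B) ↦ tr(AB) restricted to 𝔤 × 𝔤 is nondegenerate. -/
open LinearMap Module

section aux
variable {V : Type*} [AddCommGroup V] [Module ℂ V] [FiniteDimensional ℂ V]

private lemma trace_mul_eq_zero_forall (A : Module.End ℂ V)
    (h : ∀ B : Module.End ℂ V, LinearMap.trace ℂ V (A * B) = 0) : A = 0 := by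
  let b := Module.finBasis ℂ V
  apply (LinearMap.toMatrix b b).injective
  ext i j
  have := h (Matrix.toLin b b (Matrix.single j i 1))
  rw [LinearMap.trace_eq_matrix_trace ℂ b, LinearMap.toMatrix_mul,
    LinearMap.toMatrix_toLin] at this
  simp only [Matrix.trace, Matrix.mul_apply, Matrix.single, Matrix.diag,
    Matrix.of_apply, ite_and, mul_ite, mul_one, mul_zero, Finset.sum_ite_eq,
    Finset.mem_univ, if_true] at this
  simpa using this

private lemma trace_dualMap' (f : Module.End ℂ V) :
    LinearMap.trace ℂ (Module.Dual ℂ V) f.dualMap = LinearMap.trace ℂ V f := by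
  let b := Module.finBasis ℂ V
  rw [LinearMap.trace_eq_matrix_trace ℂ b.dualBasis, LinearMap.trace_eq_matrix_trace ℂ b,
    LinearMap.dualMap_def, LinearMap.toMatrix_transpose, Matrix.trace_transpose]

end aux

/-- For a finite-dimensional complex vector space `V` with a nondegenerate
symmetric or antisymmetric bilinear form, the trace pairing `(A,B) ↦ tr(AB)` restricted to
the antisymmetric endomorphisms `𝔤(V)` is nondegenerate. -/
theorem trace_pairing_nondegenerate_on_g
    (V : Type*) [AddCommGroup V] [Module ℂ V] [FiniteDimensional ℂ V]
    (Ω : LinearMap.BilinForm ℂ V) (hΩ : Ω.Nondegenerate)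
    (hform : (∀ v w, Ω v w = Ω w v) ∨ (∀ v w, Ω v w = -(Ω w v))) :
    ∀ A : Module.End ℂ V, (∀ v w, Ω (A v) w = -(Ω v (A w))) →
      (∀ C : Module.End ℂ V, (∀ v w, Ω (C v) w = -(Ω v (C w))) →
        LinearMap.trace ℂ V (A * C) = 0) →
      A = 0 := by
  intro A hA htr
  set e := Ω.toDual hΩ with he
  -- the adjoint with respect to Ω, as a linear map on endomorphisms
  set σ : Module.End ℂ V →ₗ[ℂ] Module.End ℂ V :=
    (e.symm.conj.toLinearMap) ∘ₗ (Module.Dual.transpose (R := ℂ)) with hσdef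
  -- defining property of the adjoint
  have hσ : ∀ (X : Module.End ℂ V) (w v : V), Ω (σ X w) v = Ω w (X v) := by
    intro X w v
    have h1 : σ X w = e.symm ((e w).comp X) := by
      simp only [hσdef, LinearMap.comp_apply, LinearEquiv.coe_coe, LinearEquiv.conj_apply,
        LinearMap.comp_apply, LinearEquiv.coe_coe, LinearEquiv.symm_symm]
      rfl
    rw [h1, he, LinearMap.BilinForm.apply_toDual_symm_apply]
    exact LinearMap.BilinForm.toDual_def hΩ
  -- separation in the first slot
  have hsep : ∀ x y : V, (∀ v, Ω x v = Ω y v) → x = y := by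
    intro x y h
    have h0 : ∀ v, Ω (x - y) v = 0 := by intro v; simp [h v]
    exact sub_eq_zero.mp (hΩ.1 _ h0)
  -- uniqueness of the adjoint
  have huniq : ∀ (X T : Module.End ℂ V), (∀ w v, Ω (T w) v = Ω w (X v)) → T = σ X := by
    intro X T h
    ext w
    exact hsep _ _ fun v => (h w v).trans (hσ X w v).symm
  -- A is in g iff σ A = -A
  have hσA : σ A = -A := by
    refine (huniq A (-A) fun w v => ?_).symm
    simp [hA w v]
  -- σ is an involution (uses symmetry/antisymmetry of the form)
  have hinv : ∀ X : Module.End ℂ V, σ (σ X) = X := by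
    intro X
    refine (huniq (σ X) X fun w v => ?_).symm
    rcases hform with hs | ha
    · rw [hs w (σ X v), hσ, hs v (X w)]
    · rw [ha w (σ X v), hσ, ha v (X w), neg_neg]
  -- σ is an anti-homomorphism
  have hmul : ∀ X Y : Module.End ℂ V, σ (X * Y) = σ Y * σ X := by
    intro X Y
    refine (huniq (X * Y) (σ Y * σ X) fun w v => ?_).symm
    rw [Module.End.mul_apply, hσ, hσ, Module.End.mul_apply]
  -- σ preserves trace
  have htrσ : ∀ X : Module.End ℂ V, LinearMap.trace ℂ V (σ X) = LinearMap.trace ℂ V X := by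
    intro X
    have h1 : σ X = e.symm.conj (X.dualMap) := by
      simp [hσdef, LinearMap.dualMap_def]
    rw [h1, LinearMap.trace_conj', trace_dualMap']
  -- main computation: trace (A * B) = 0 for all B
  have key : ∀ B : Module.End ℂ V, LinearMap.trace ℂ V (A * B) = 0 := by
    intro B
    -- the antisymmetric part of B lies in g
    set C : Module.End ℂ V := (2⁻¹ : ℂ) • (B - σ B) with hC
    have hσC : σ C = -C := by
      rw [hC, map_smul, map_sub, hinv]
      module
    have hCg : ∀ v w, Ω (C v) w = -(Ω v (C w)) := by
      intro v w
      have h1 := hσ C v w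
      rw [hσC] at h1
      simp only [LinearMap.neg_apply, map_neg] at h1
      linear_combination -h1
    have hC0 : LinearMap.trace ℂ V (A * C) = 0 := htr C hCg
    -- trace (A * σ B) = - trace (A * B)
    have hAs : LinearMap.trace ℂ V (A * σ B) = -LinearMap.trace ℂ V (A * B) := by
      have h1 : LinearMap.trace ℂ V (A * σ B) = LinearMap.trace ℂ V (σ (A * σ B)) :=
        (htrσ _).symm
      rw [hmul, hinv, hσA] at h1
      rw [h1, mul_neg, map_neg, LinearMap.trace_mul_comm]
    have hdecomp : A * B = A * C + (2⁻¹ : ℂ) • (A * B + A * σ B) := by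
      rw [hC, mul_smul_comm, mul_sub]
      module
    rw [hdecomp, map_add, hC0, zero_add, map_smul, map_add, hAs]
    simp
  exact trace_mul_eq_zero_forall A key
end

section
/- Let V be a finite-dimensional complex vector space with a nondegenerate symmetric or antisymmetric bilinear form, and let 𝔭 = 𝔭(V) be the space of endomorphisms symmetric with respect to the form. Then the trace pairing (A,B) ↦ tr(AB) restricted to 𝔭 × 𝔭 is nondegenerate. -/
open LinearMap

lemma aux_trace_nondeg (V : Type*) [AddCommGroup V] [Module ℂ V] [FiniteDimensional ℂ V]
    (A : Module.End ℂ V) (h : ∀ B : Module.End ℂ V, LinearMap.trace ℂ V (A * B) = 0) :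
    A = 0 := by
  let b := Module.finBasis ℂ V
  have hm : LinearMap.toMatrix b b A = 0 := by
    ext i j
    have := h ((LinearMap.toMatrix b b).symm (Matrix.single j i 1))
    rw [LinearMap.trace_eq_matrix_trace ℂ b, LinearMap.toMatrix_mul,
      LinearEquiv.apply_symm_apply] at this
    rw [Matrix.trace] at this
    rw [Finset.sum_eq_single i] at this
    · simpa using this
    · intro k _ hk
      simp [Matrix.diag, Matrix.mul_single_apply_of_ne _ _ _ _ (c := (1:ℂ)) hk]
    · simp
  exact (LinearMap.toMatrix b b).injective (by simpa using hm)

/-- For a finite-dimensional complex vector space `V` with a nondegenerate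
symmetric or antisymmetric bilinear form, the trace pairing `(A,B) ↦ tr(AB)` restricted to
the symmetric endomorphisms `𝔭(V)` is nondegenerate. -/
theorem trace_pairing_nondegenerate_on_p
    (V : Type*) [AddCommGroup V] [Module ℂ V] [FiniteDimensional ℂ V]
    (Ω : LinearMap.BilinForm ℂ V) (hΩ : Ω.Nondegenerate)
    (hform : (∀ v w, Ω v w = Ω w v) ∨ (∀ v w, Ω v w = -(Ω w v))) :
    ∀ A : Module.End ℂ V, (∀ v w, Ω (A v) w = Ω v (A w)) →
      (∀ C : Module.End ℂ V, (∀ v w, Ω (C v) w = Ω v (C w)) →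
        LinearMap.trace ℂ V (A * C) = 0) →
      A = 0 := by
  intro A hA htr
  -- flip of Ω is nondegenerate
  have hflip : Ω.flip.Nondegenerate := by
    exact hΩ.flip
  -- injectivity from the right
  have hinj : ∀ x y : V, (∀ v, Ω v x = Ω v y) → x = y := by
    intro x y hxy
    have : ∀ n, Ω.flip (x - y) n = 0 := by
      intro n
      simp [LinearMap.BilinForm.flip_apply, map_sub, hxy n]
    have := hflip.1 (x - y) this
    exact sub_eq_zero.mp this
  set e : V ≃ₗ[ℂ] Module.Dual ℂ V := Ω.flip.toDual hflip with he
  have he_apply : ∀ x v : V, e x v = Ω v x := fun x v => rfl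
  -- the adjoint
  set adj : Module.End ℂ V → Module.End ℂ V :=
    fun B => e.symm.toLinearMap ∘ₗ (Module.Dual.transpose (R := ℂ) B) ∘ₗ e.toLinearMap with hadjdef
  have key : ∀ (B : Module.End ℂ V) (v w : V), Ω v (adj B w) = Ω (B v) w := by
    intro B v w
    rw [← he_apply]
    show e (e.symm ((Module.Dual.transpose (R := ℂ) B) (e w))) v = _
    rw [e.apply_symm_apply, Module.Dual.transpose_apply]
    exact he_apply w (B v)
  -- adj A = A
  have hadjA : adj A = A := by
    ext w
    apply hinj
    intro v
    rw [key, hA]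
  -- adj is multiplicative-reversing: adj (B * C) = adj C * adj B
  have hadjmul : ∀ B C : Module.End ℂ V, adj C * adj B = adj (B * C) := by
    intro B C
    ext w
    show e.symm ((Module.Dual.transpose (R := ℂ) C)
        (e (e.symm ((Module.Dual.transpose (R := ℂ) B) (e w))))) = _
    rw [e.apply_symm_apply]
    rfl
  -- trace of adj
  have hadjtr : ∀ B : Module.End ℂ V,
      LinearMap.trace ℂ V (adj B) = LinearMap.trace ℂ V B := by
    intro B
    have : adj B = e.symm.conj (Module.Dual.transpose (R := ℂ) B) := by
      ext w; simp [hadjdef, LinearEquiv.conj_apply]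
    rw [this, LinearMap.trace_conj', LinearMap.trace_transpose']
  -- main computation
  apply aux_trace_nondeg
  intro B
  have hCsymm : ∀ v w, Ω ((B + adj B) v) w = Ω v ((B + adj B) w) := by
    intro v w
    have h1 : Ω (adj B v) w = Ω v (B w) := by
      rcases hform with hs | ha
      · rw [hs, key, hs]
      · rw [ha (adj B v) w, key, ← ha]
    simp only [LinearMap.add_apply, map_add]
    rw [h1, key]
    exact add_comm _ _
  have h0 := htr (B + adj B) hCsymm
  have h2 : LinearMap.trace ℂ V (A * adj B) = LinearMap.trace ℂ V (A * B) := by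
    calc LinearMap.trace ℂ V (A * adj B)
        = LinearMap.trace ℂ V (adj A * adj B) := by rw [hadjA]
      _ = LinearMap.trace ℂ V (adj (B * A)) := by rw [hadjmul]
      _ = LinearMap.trace ℂ V (B * A) := hadjtr _
      _ = LinearMap.trace ℂ V (A * B) := LinearMap.trace_mul_comm ℂ B A
  rw [mul_add, map_add, h2, ← two_mul] at h0
  exact (mul_eq_zero.mp h0).resolve_left two_ne_zero
end

section
/- Let V be a symplectic vector space over ℂ and B ∈ 𝔭(V) a symmetric endomorphism. Then for every eigenvalue a of B, the dimensions dim(ker((B-a)^l)/ker((B-a)^{l-1})) are even for all l ≥ 1; in particular every generalized eigenspace of B is even-dimensional. -/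
open Module LinearMap

theorem even_finrank_of_alt_nondeg {V : Type*} [AddCommGroup V] [Module ℂ V]
    [FiniteDimensional ℂ V] (B : LinearMap.BilinForm ℂ V) (halt : B.IsAlt)
    (hB : B.Nondegenerate) : Even (finrank ℂ V) := by
  let b := finBasis ℂ V
  have hdet : Matrix.det (LinearMap.BilinForm.toMatrix b B) ≠ 0 :=
    (LinearMap.BilinForm.nondegenerate_iff_det_ne_zero b).mp hB
  have hskew : Matrix.transpose (LinearMap.BilinForm.toMatrix b B) = -(LinearMap.BilinForm.toMatrix b B) := by
    ext i j
    simp only [Matrix.transpose_apply, LinearMap.BilinForm.toMatrix_apply, Matrix.neg_apply]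
    exact (LinearMap.IsAlt.neg halt (b i) (b j)).symm
  have h1 : Matrix.det (LinearMap.BilinForm.toMatrix b B)
      = (-1 : ℂ) ^ finrank ℂ V * Matrix.det (LinearMap.BilinForm.toMatrix b B) := by
    conv_lhs => rw [← Matrix.det_transpose, hskew, Matrix.det_neg]
    simp [Fintype.card_fin]
  have h2 : ((-1 : ℂ) ^ finrank ℂ V) = 1 :=
    mul_right_cancel₀ hdet (by rw [one_mul]; exact h1.symm)
  exact (neg_one_pow_eq_one_iff_even (by norm_num : (-1:ℂ) ≠ 1)).mp h2

theorem orth_ker_eq_range {V : Type*} [AddCommGroup V] [Module ℂ V]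
    [FiniteDimensional ℂ V] (Ω : LinearMap.BilinForm ℂ V) (hΩ : Ω.Nondegenerate)
    (hrefl : Ω.IsRefl) (f : Module.End ℂ V)
    (hsym : ∀ v w, Ω (f v) w = Ω v (f w)) :
    Ω.orthogonal (LinearMap.ker f) = LinearMap.range (f : V →ₗ[ℂ] V) := by
  have hle : LinearMap.range (f : V →ₗ[ℂ] V) ≤ Ω.orthogonal (LinearMap.ker f) := by
    rintro x ⟨u, rfl⟩
    rw [LinearMap.BilinForm.mem_orthogonal_iff]
    intro n hn
    show Ω n (f u) = 0
    rw [← hsym n u, LinearMap.mem_ker.mp hn]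
    simp
  refine (Submodule.eq_of_le_of_finrank_le hle ?_).symm
  rw [LinearMap.BilinForm.finrank_orthogonal hΩ]
  have h1 := LinearMap.finrank_range_add_finrank_ker (f : V →ₗ[ℂ] V)
  have h2 : finrank ℂ (LinearMap.ker f) ≤ finrank ℂ V := Submodule.finrank_le _
  omega

theorem aux_step {V : Type*} [AddCommGroup V] [Module ℂ V]
    [FiniteDimensional ℂ V] (Ω : LinearMap.BilinForm ℂ V) (hΩ : Ω.Nondegenerate)
    (halt : Ω.IsAlt) (N : Module.End ℂ V)
    (hsym : ∀ v w, Ω (N v) w = Ω v (N w)) (m : ℕ) :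
    ∃ q : ℕ, Even q ∧
      finrank ℂ (LinearMap.ker (N ^ (m+1))) + finrank ℂ (LinearMap.ker (N ^ (m+1)))
        = q + finrank ℂ (LinearMap.ker (N ^ m)) + finrank ℂ (LinearMap.ker (N ^ (m+2))) := by
  have hrefl : Ω.IsRefl := halt.isRefl
  have hpow : ∀ (k : ℕ) (v w : V), Ω ((N ^ k) v) w = Ω v ((N ^ k) w) := by
    intro k
    induction k with
    | zero => intro v w; simp
    | succ k ih =>
      intro v w
      rw [pow_succ, Module.End.mul_apply, Module.End.mul_apply, ih (N v) w, hsym v,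
        ← Module.End.mul_apply, ← pow_succ', pow_succ, Module.End.mul_apply]
  set W : Submodule ℂ V := LinearMap.ker (N ^ (m+1)) with hW
  set T : W →ₗ[ℂ] W →ₗ[ℂ] ℂ :=
    Ω.compl₁₂ (((N ^ m : Module.End ℂ V) : V →ₗ[ℂ] V) ∘ₗ W.subtype) W.subtype with hT
  have hTapp : ∀ v w : W, T v w = Ω ((N ^ m) (v : V)) (w : V) := fun v w => rfl
  have hTskew : ∀ v w : W, T v w = - T w v := by
    intro v w
    rw [hTapp, hTapp, hpow m]
    exact (LinearMap.IsAlt.neg halt _ (v : V)).symm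
  set R : Submodule ℂ W := LinearMap.ker T with hR
  -- descend to the quotient
  have hR2 : ∀ w : W, w ∈ R → ∀ v : W, T v w = 0 := by
    intro w hw v
    rw [hTskew v w]
    rw [LinearMap.mem_ker.mp hw]
    simp
  have hps1 : ∀ (k : ℕ) (x : V), (N ^ (k+1)) x = N ((N ^ k) x) := by
    intro k x; rw [pow_succ', Module.End.mul_apply]
  have hps2 : ∀ (k : ℕ) (x : V), (N ^ (k+1)) x = (N ^ k) (N x) := by
    intro k x; rw [pow_succ, Module.End.mul_apply]
  have hKmono : ∀ k : ℕ, LinearMap.ker (N ^ k) ≤ LinearMap.ker (N ^ (k+1)) := by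
    intro k x hx
    rw [LinearMap.mem_ker, hps1, LinearMap.mem_ker.mp hx, map_zero]
  -- the induced form on the quotient
  have hRker : R ≤ LinearMap.ker T := hR.le
  set T2 : (W ⧸ R) →ₗ[ℂ] W →ₗ[ℂ] ℂ := R.liftQ T hRker with hT2
  have hT2app : ∀ v : W, T2 (Submodule.Quotient.mk v) = T v := fun v => rfl
  have hle3 : R ≤ LinearMap.ker T2.flip := by
    intro w hw
    rw [LinearMap.mem_ker]
    apply LinearMap.ext
    intro q
    obtain ⟨v, rfl⟩ := Submodule.Quotient.mk_surjective R q
    show T2 (Submodule.Quotient.mk v) w = (0 : (W ⧸ R) →ₗ[ℂ] ℂ) (Submodule.Quotient.mk v)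
    rw [hT2app, hR2 w hw v]
    simp
  set Tbar : (W ⧸ R) →ₗ[ℂ] (W ⧸ R) →ₗ[ℂ] ℂ := R.liftQ T2.flip hle3 with hTbar
  have hTbarapp : ∀ v w : W,
      Tbar (Submodule.Quotient.mk w) (Submodule.Quotient.mk v) = T v w := fun v w => rfl
  have hTbarAlt : Tbar.IsAlt := by
    intro q
    obtain ⟨v, rfl⟩ := Submodule.Quotient.mk_surjective R q
    rw [hTbarapp]
    have h := hTskew v v
    rw [eq_neg_iff_add_eq_zero] at h
    exact add_self_eq_zero.mp h
  have hTbarNondeg : LinearMap.BilinForm.Nondegenerate Tbar := by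
    refine (hTbarAlt.isRefl.nondegenerate_iff_separatingLeft).mpr ?_
    intro q hq
    obtain ⟨w, rfl⟩ := Submodule.Quotient.mk_surjective R q
    rw [Submodule.Quotient.mk_eq_zero]
    rw [hR, LinearMap.mem_ker]
    apply LinearMap.ext
    intro v
    have h := hq (Submodule.Quotient.mk v)
    rw [hTbarapp] at h
    rw [hTskew w v]
    show -T v w = 0
    rw [h, neg_zero]
  have hQeven : Even (finrank ℂ (W ⧸ R)) := even_finrank_of_alt_nondeg Tbar hTbarAlt hTbarNondeg
  have e1 : finrank ℂ (W ⧸ R) + finrank ℂ R = finrank ℂ W :=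
    Submodule.finrank_quotient_add_finrank R
  -- identify (the image in V of) the radical R
  have hmap : Submodule.map W.subtype R
      = LinearMap.ker (N ^ m) ⊔ Submodule.map (N : V →ₗ[ℂ] V) (LinearMap.ker (N ^ (m+2))) := by
    apply le_antisymm
    · rintro x ⟨⟨v, hvW⟩, hvR, rfl⟩
      have hperp : (N ^ m) v ∈ Ω.orthogonal W := by
        rw [LinearMap.BilinForm.mem_orthogonal_iff]
        intro n hn
        have h0 := LinearMap.congr_fun (LinearMap.mem_ker.mp hvR) ⟨n, hn⟩
        rw [hTapp] at h0
        exact hrefl _ _ h0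
      rw [hW, orth_ker_eq_range Ω hΩ hrefl _ (hpow (m+1))] at hperp
      obtain ⟨u, hu⟩ := hperp
      have hvK : (N ^ (m+1)) v = 0 := LinearMap.mem_ker.mp hvW
      have hu2 : u ∈ LinearMap.ker (N ^ (m+2)) := by
        rw [LinearMap.mem_ker, hps1 (m+1) u, hu, ← hps1 m v, hvK]
      refine Submodule.mem_sup.mpr ⟨v - N u, ?_, N u, ⟨u, hu2, rfl⟩, by abel⟩
      rw [LinearMap.mem_ker, map_sub, ← hps2 m u, hu, sub_self]
    · apply sup_le
      · intro v hv
        have hvm : (N ^ m) v = 0 := LinearMap.mem_ker.mp hv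
        have hvW : v ∈ W := hKmono m hv
        refine ⟨⟨v, hvW⟩, ?_, rfl⟩
        simp only [SetLike.mem_coe, hR, LinearMap.mem_ker]
        apply LinearMap.ext
        intro w
        rw [hTapp]
        show Ω ((N ^ m) v) (w : V) = 0
        rw [hvm, map_zero]
        rfl
      · rintro x ⟨u, hu, rfl⟩
        have huW : N u ∈ W := by
          rw [hW, LinearMap.mem_ker, ← hps2 (m+1) u]
          exact LinearMap.mem_ker.mp hu
        refine ⟨⟨N u, huW⟩, ?_, rfl⟩
        simp only [SetLike.mem_coe, hR, LinearMap.mem_ker]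
        apply LinearMap.ext
        intro w
        rw [hTapp]
        show Ω ((N ^ m) (N u)) (w : V) = 0
        rw [← hps2 m u, hpow (m+1) u (w : V), LinearMap.mem_ker.mp w.2, map_zero]
  have e2 : finrank ℂ R
      = finrank ℂ ↥(LinearMap.ker (N ^ m) ⊔ Submodule.map (N : V →ₗ[ℂ] V) (LinearMap.ker (N ^ (m+2)))) := by
    rw [← hmap, Submodule.finrank_map_subtype_eq]
  -- the intersection
  have hinf : LinearMap.ker (N ^ m) ⊓ Submodule.map (N : V →ₗ[ℂ] V) (LinearMap.ker (N ^ (m+2)))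
      = Submodule.map (N : V →ₗ[ℂ] V) (LinearMap.ker (N ^ (m+1))) := by
    apply le_antisymm
    · rintro x ⟨hx1, u, hu, rfl⟩
      refine ⟨u, ?_, rfl⟩
      simp only [SetLike.mem_coe, LinearMap.mem_ker, hps2 m u]
      exact LinearMap.mem_ker.mp hx1
    · rintro x ⟨u, hu, rfl⟩
      refine ⟨?_, ⟨u, hKmono (m+1) hu, rfl⟩⟩
      simp only [SetLike.mem_coe, LinearMap.mem_ker, ← hps2 m u]
      exact LinearMap.mem_ker.mp hu
  have e3 := Submodule.finrank_sup_add_finrank_inf_eq (LinearMap.ker (N ^ m))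
    (Submodule.map (N : V →ₗ[ℂ] V) (LinearMap.ker (N ^ (m+2))))
  rw [hinf] at e3
  -- dimensions of images
  have hmapdim : ∀ k : ℕ, finrank ℂ (Submodule.map (N : V →ₗ[ℂ] V) (LinearMap.ker (N ^ (k+1))))
      + finrank ℂ (LinearMap.ker (N : V →ₗ[ℂ] V)) = finrank ℂ (LinearMap.ker (N ^ (k+1))) := by
    intro k
    have hle : LinearMap.ker (N : V →ₗ[ℂ] V) ≤ LinearMap.ker (N ^ (k+1)) := by
      intro x hx
      rw [LinearMap.mem_ker, hps2 k x, LinearMap.mem_ker.mp hx, map_zero]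
    have h1 := LinearMap.finrank_range_add_finrank_ker
      ((N : V →ₗ[ℂ] V).domRestrict (LinearMap.ker (N ^ (k+1))))
    rw [LinearMap.range_domRestrict, LinearMap.ker_domRestrict] at h1
    rw [(Submodule.comapSubtypeEquivOfLe hle).finrank_eq] at h1
    exact h1
  have e5 := hmapdim m
  have e6 : finrank ℂ (Submodule.map (N : V →ₗ[ℂ] V) (LinearMap.ker (N ^ (m+2))))
      + finrank ℂ (LinearMap.ker (N : V →ₗ[ℂ] V)) = finrank ℂ (LinearMap.ker (N ^ (m+2))) :=
    hmapdim (m+1)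
  refine ⟨finrank ℂ (W ⧸ R), hQeven, ?_⟩
  have hWrank : finrank ℂ W = finrank ℂ (LinearMap.ker (N ^ (m+1))) := rfl
  omega


/-- Let `V` be a complex symplectic vector space and `B ∈ 𝔭(V)` symmetric with
respect to the symplectic form. Then for every eigenvalue `a` of `B` the successive kernel
quotient dimensions `dim ker((B-a)^l) - dim ker((B-a)^{l-1})` are even for all `l ≥ 1`;
in particular every generalized eigenspace of `B` is even-dimensional. -/
theorem symmetric_endo_even_jordan_blocks
    (V : Type*) [AddCommGroup V] [Module ℂ V] [FiniteDimensional ℂ V]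
    (Ω : LinearMap.BilinForm ℂ V) (hΩ : Ω.Nondegenerate)
    (halt : ∀ v w, Ω v w = -(Ω w v))
    (B : Module.End ℂ V) (hB : ∀ v w, Ω (B v) w = Ω v (B w))
    (a : ℂ) (ha : Module.End.HasEigenvalue B a) :
    (∀ l : ℕ, 1 ≤ l →
      Even (Module.finrank ℂ ↥(LinearMap.ker ((B - a • 1) ^ l)) -
        Module.finrank ℂ ↥(LinearMap.ker ((B - a • 1) ^ (l - 1))))) ∧
    Even (Module.finrank ℂ ↥(⨆ k : ℕ, LinearMap.ker ((B - a • 1) ^ k))) := by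
  have halt' : Ω.IsAlt := by
    intro v
    have h := halt v v
    rw [eq_neg_iff_add_eq_zero] at h
    exact add_self_eq_zero.mp h
  set N : Module.End ℂ V := B - a • 1 with hN
  have hNsym : ∀ v w, Ω (N v) w = Ω v (N w) := by
    intro v w
    simp only [hN, LinearMap.sub_apply, LinearMap.smul_apply, Module.End.one_apply,
      map_sub, map_smul, smul_eq_mul, hB v w]
  have key := fun m => aux_step Ω hΩ halt' N hNsym m
  have hKmono : ∀ k : ℕ, LinearMap.ker (N ^ k) ≤ LinearMap.ker (N ^ (k+1)) := by
    intro k x hx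
    rw [LinearMap.mem_ker, pow_succ', Module.End.mul_apply, LinearMap.mem_ker.mp hx, map_zero]
  set n := finrank ℂ V with hn
  have hstab : ∀ k, n ≤ k → LinearMap.ker (N ^ k) = LinearMap.ker (N ^ n) :=
    fun k hk => Module.End.ker_pow_eq_ker_pow_finrank_of_le hk
  have evend : ∀ (k m : ℕ), n ≤ m + k →
      Even (finrank ℂ (LinearMap.ker (N ^ (m+1))) - finrank ℂ (LinearMap.ker (N ^ m))) := by
    intro k
    induction k with
    | zero =>
      intro m hm
      have h1 : LinearMap.ker (N ^ (m+1)) = LinearMap.ker (N ^ n) := hstab _ (by omega)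
      have h2 : LinearMap.ker (N ^ m) = LinearMap.ker (N ^ n) := hstab _ (by omega)
      rw [h1, h2, Nat.sub_self]
      exact Even.zero
    | succ k ih =>
      intro m hm
      by_cases h : n ≤ m + k
      · exact ih m h
      · have h2 : Even (finrank ℂ (LinearMap.ker (N ^ (m+2)))
            - finrank ℂ (LinearMap.ker (N ^ (m+1)))) := ih (m+1) (by omega)
        obtain ⟨q, hq, heq⟩ := key m
        have l1 : finrank ℂ (LinearMap.ker (N ^ m)) ≤ finrank ℂ (LinearMap.ker (N ^ (m+1))) :=
          Submodule.finrank_mono (hKmono m)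
        have l2 : finrank ℂ (LinearMap.ker (N ^ (m+1))) ≤ finrank ℂ (LinearMap.ker (N ^ (m+2))) :=
          Submodule.finrank_mono (hKmono (m+1))
        rw [Nat.even_iff] at h2 hq ⊢
        omega
  constructor
  · intro l hl
    obtain ⟨m, rfl⟩ : ∃ m, l = m + 1 := ⟨l - 1, by omega⟩
    simpa [Nat.add_sub_cancel] using evend n m (by omega)
  · have hsup : (⨆ k : ℕ, LinearMap.ker (N ^ k)) = LinearMap.ker (N ^ n) := by
      apply le_antisymm
      · exact iSup_le fun k => Module.End.ker_pow_le_ker_pow_finrank N k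
      · exact le_iSup (fun k => LinearMap.ker (N ^ k)) n
    rw [hsup]
    have hall : ∀ j : ℕ, Even (finrank ℂ (LinearMap.ker (N ^ j))) := by
      intro j
      induction j with
      | zero =>
        have h0 : LinearMap.ker ((N : Module.End ℂ V) ^ 0) = ⊥ := by
          rw [pow_zero]
          exact LinearMap.ker_id
        rw [h0, finrank_bot]
        exact Even.zero
      | succ j ih =>
        have hd := evend n j (by omega)
        have l1 : finrank ℂ (LinearMap.ker (N ^ j)) ≤ finrank ℂ (LinearMap.ker (N ^ (j+1))) :=
          Submodule.finrank_mono (hKmono j)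
        rw [Nat.even_iff] at ih hd ⊢
        omega
    exact hall n
end

section
/- Let V be a finite-dimensional complex vector space with a nondegenerate symmetric or antisymmetric form, G(V) the group of linear automorphisms preserving the form, and B ∈ 𝔭(V). Then the G(V)-conjugacy orbit of B equals the intersection of the GL(V)-conjugacy orbit of B with 𝔭(V); i.e., any A ∈ 𝔭(V) conjugate to B by some element of GL(V) is conjugate to B by an element of G(V). -/
open Polynomial

private lemma sqrt_mod_pow (l : ℂ) (hl : l ≠ 0) :
    ∀ k : ℕ, 1 ≤ k → ∃ q : ℂ[X], (X - C l) ^ k ∣ q ^ 2 - X := by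
  intro k hk
  induction k with
  | zero => omega
  | succ k ih =>
    rcases Nat.lt_or_ge 1 (k+1) with h1 | h1
    · have hk' : 1 ≤ k := by omega
      obtain ⟨q, s, hs⟩ := ih hk'
      have hql : q.eval l ^ 2 = l := by
        have hdvd1 : (X - C l) ∣ q ^ 2 - X :=
          dvd_trans (dvd_pow_self _ (by omega)) ⟨s, hs⟩
        have h := (dvd_iff_isRoot).mp hdvd1
        simp only [IsRoot, eval_sub, eval_pow, eval_X] at h
        exact sub_eq_zero.mp h
      have hq0 : q.eval l ≠ 0 := by
        intro h0
        rw [h0] at hql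
        simp at hql
        exact hl hql.symm
      set r : ℂ := -(s.eval l) / (2 * q.eval l) with hr
      refine ⟨q + C r * (X - C l) ^ k, ?_⟩
      have expand : (q + C r * (X - C l) ^ k) ^ 2 - X
          = (X - C l) ^ k * (s + 2 * C r * q + C r ^ 2 * (X - C l) ^ k) := by
        linear_combination hs
      rw [expand, pow_succ]
      refine mul_dvd_mul dvd_rfl ?_
      rw [dvd_iff_isRoot]
      have hX : ((X - C l) ^ k).eval l = 0 := by
        simp only [eval_pow, eval_sub, eval_X, eval_C, sub_self]
        exact zero_pow (by omega)
      simp only [IsRoot, eval_add, eval_mul, eval_pow, eval_ofNat, eval_C, hX, mul_zero]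
      rw [hr]
      field_simp
      ring
    · have hk1 : k + 1 = 1 := by omega
      obtain ⟨c, hc⟩ := IsAlgClosed.exists_pow_nat_eq l (n := 2) (by norm_num)
      refine ⟨C c, ?_⟩
      rw [hk1, pow_one]
      have h2 : (C c) ^ 2 - X = -(X - C l) := by
        rw [← C_pow, hc]; ring
      rw [h2]
      exact dvd_neg.mpr dvd_rfl

private lemma sqrt_mod_prod (s : Finset ℂ) (f : ℂ → ℂ[X])
    (hcop : ∀ a ∈ s, ∀ b ∈ s, a ≠ b → IsCoprime (f a) (f b))
    (hq : ∀ a ∈ s, ∃ q : ℂ[X], f a ∣ q ^ 2 - X) :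
    ∃ p : ℂ[X], (∏ a ∈ s, f a) ∣ p ^ 2 - X := by
  classical
  induction s using Finset.induction_on with
  | empty => exact ⟨0, by simp⟩
  | insert a s ha ih =>
    obtain ⟨p, hp⟩ := ih
      (fun x hx y hy hxy => hcop x (Finset.mem_insert_of_mem hx) y (Finset.mem_insert_of_mem hy) hxy)
      (fun x hx => hq x (Finset.mem_insert_of_mem hx))
    obtain ⟨q, hqa⟩ := hq a (Finset.mem_insert_self a s)
    have cop : IsCoprime (f a) (∏ b ∈ s, f b) := by
      refine IsCoprime.prod_right fun b hb => ?_
      exact hcop a (Finset.mem_insert_self a s) b (Finset.mem_insert_of_mem hb)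
        (fun h => ha (h ▸ hb))
    obtain ⟨u, v, huv⟩ := cop
    set g := ∏ b ∈ s, f b with hg
    set p' := p * (u * f a) + q * (v * g) with hp'
    have h1 : f a ∣ p' - q := ⟨u * (p - q), by linear_combination q * huv⟩
    have h2 : g ∣ p' - p := ⟨v * (q - p), by linear_combination p * huv⟩
    have hfa : f a ∣ p' ^ 2 - X := by
      have : p' ^ 2 - X = (p' - q) * (p' + q) + (q ^ 2 - X) := by ring
      rw [this]
      exact dvd_add (h1.mul_right _) hqa
    have hgd : g ∣ p' ^ 2 - X := by
      have : p' ^ 2 - X = (p' - p) * (p' + p) + (p ^ 2 - X) := by ring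
      rw [this]
      exact dvd_add (h2.mul_right _) hp
    refine ⟨p', ?_⟩
    rw [Finset.prod_insert ha]
    exact IsCoprime.mul_dvd ⟨u, v, huv⟩ hfa hgd
private lemma exists_sqrt_poly {V : Type*} [AddCommGroup V] [Module ℂ V]
    [FiniteDimensional ℂ V] (M : Module.End ℂ V) (hM : IsUnit M) :
    ∃ p : ℂ[X], (aeval M p) ^ 2 = M := by
  classical
  set μ := minpoly ℂ M with hμdef
  have hint : IsIntegral ℂ M := IsIntegral.of_finite ℂ M
  have hmonic : μ.Monic := minpoly.monic hint
  have hμ0 : μ ≠ 0 := hmonic.ne_zero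
  have hroots : ∀ l ∈ μ.roots, l ≠ 0 := by
    intro l hl h0
    subst h0
    have hdvd : X ∣ μ := by
      have h1 := dvd_iff_isRoot.mpr (isRoot_of_mem_roots hl)
      simpa using h1
    obtain ⟨g, hg⟩ := hdvd
    have hg0 : g ≠ 0 := by
      rintro rfl
      rw [mul_zero] at hg
      exact hμ0 hg
    have hgM : aeval M g = 0 := by
      obtain ⟨u, hu⟩ := hM
      have h1 : M * aeval M g = 0 := by
        have h2 := minpoly.aeval ℂ M
        rw [← hμdef] at h2
        rw [hg, map_mul, aeval_X] at h2
        exact h2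
      calc aeval M g = (↑u⁻¹ * ↑u) * aeval M g := by rw [u.inv_mul, one_mul]
        _ = ↑u⁻¹ * (M * aeval M g) := by rw [mul_assoc, hu]
        _ = 0 := by rw [h1, mul_zero]
    have hdvd2 : μ ∣ g := minpoly.dvd ℂ M hgM
    have hdeg : g.degree < μ.degree := by
      rw [hg, mul_comm]
      exact degree_lt_degree_mul_X hg0
    exact hg0 (eq_zero_of_dvd_of_degree_lt hdvd2 hdeg)
  have hsplit : μ = (μ.roots.map fun a => X - C a).prod :=
    (IsAlgClosed.splits μ).eq_prod_roots_of_monic hmonic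
  have hgroup : (μ.roots.map fun a => X - C a).prod
      = ∏ l ∈ μ.roots.toFinset, (X - C l) ^ μ.roots.count l :=
    Finset.prod_multiset_map_count _ _
  obtain ⟨p, hp⟩ := sqrt_mod_prod μ.roots.toFinset
    (fun l => (X - C l) ^ μ.roots.count l)
    (by
      intro a _ b _ hab
      exact (Polynomial.pairwise_coprime_X_sub_C (Function.injective_id) hab).pow)
    (by
      intro a ha
      exact sqrt_mod_pow a (hroots a (Multiset.mem_toFinset.mp ha)) _
        (Multiset.count_pos.mpr (Multiset.mem_toFinset.mp ha)))
  refine ⟨p, ?_⟩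
  have hdvd : μ ∣ p ^ 2 - X := by
    rw [hsplit, hgroup]; exact hp
  obtain ⟨c, hc⟩ := hdvd
  have h0 : aeval M (p ^ 2 - X) = 0 := by
    rw [hc, map_mul, minpoly.aeval, zero_mul]
  rw [map_sub, map_pow, aeval_X, sub_eq_zero] at h0
  exact h0

/-- Let `V` be a finite-dimensional complex vector space with a nondegenerate
symmetric or antisymmetric bilinear form and `A, B ∈ 𝔭(V)`. Then `A` and `B` are conjugate
under `GL(V)` if and only if they are conjugate under the isometry group `G(V)` of the form;
i.e. `G(V)·B = GL(V)·B ∩ 𝔭(V)`. -/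
theorem isometry_orbit_eq_gl_orbit_inter_p
    (V : Type*) [AddCommGroup V] [Module ℂ V] [FiniteDimensional ℂ V]
    (Ω : LinearMap.BilinForm ℂ V) (hΩ : Ω.Nondegenerate)
    (hform : (∀ v w, Ω v w = Ω w v) ∨ (∀ v w, Ω v w = -(Ω w v)))
    (A B : Module.End ℂ V)
    (hA : ∀ v w, Ω (A v) w = Ω v (A w))
    (hB : ∀ v w, Ω (B v) w = Ω v (B w)) :
    (∃ g : V ≃ₗ[ℂ] V, ∀ v, g (B v) = A (g v)) ↔
    (∃ g : V ≃ₗ[ℂ] V, (∀ v w, Ω (g v) (g w) = Ω v w) ∧ ∀ v, g (B v) = A (g v)) := by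
  constructor
  · rintro ⟨g, hg⟩
    classical
    set ι := Ω.toDual hΩ with hι
    have ιdef : ∀ x y : V, ι x y = Ω x y := fun x y => LinearMap.BilinForm.toDual_def hΩ
    set adj : Module.End ℂ V → Module.End ℂ V :=
      fun T => ι.symm.toLinearMap ∘ₗ (T.dualMap ∘ₗ ι.toLinearMap) with hadj
    have adjapp : ∀ (T : Module.End ℂ V) (w : V), adj T w = ι.symm (T.dualMap (ι w)) :=
      fun T w => rfl
    have adj1 : ∀ (T : Module.End ℂ V) (w v : V), Ω (adj T w) v = Ω w (T v) := by
      intro T w v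
      rw [← ιdef, adjapp, LinearEquiv.apply_symm_apply, LinearMap.dualMap_apply, ιdef]
    have adj2 : ∀ (T : Module.End ℂ V) (v w : V), Ω v (adj T w) = Ω (T v) w := by
      intro T v w
      rcases hform with hs | ha
      · rw [hs v, adj1, hs]
      · rw [ha v, adj1, ha (T v) w]
    have hcancel : ∀ x y : V, (∀ v, Ω v x = Ω v y) → x = y := by
      intro x y h
      have h2 : ∀ v, Ω (x - y) v = 0 := by
        intro v
        rcases hform with hs | ha
        · rw [hs]
          simp [map_sub, h v]
        · rw [ha]
          simp [map_sub, h v]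
      have h3 := hΩ.1 (x - y) h2
      rwa [sub_eq_zero] at h3
    set gl : Module.End ℂ V := g.toLinearMap with hgl
    have hglapp : ∀ v, gl v = g v := fun v => rfl
    set M : Module.End ℂ V := adj gl ∘ₗ gl with hM
    have hMapp : ∀ v, M v = adj gl (g v) := fun v => rfl
    have hMg : ∀ x y, Ω (M x) y = Ω (g x) (g y) := by
      intro x y
      rw [hMapp, adj1, hglapp]
    have hMr : ∀ x y, Ω x (M y) = Ω (g x) (g y) := by
      intro x y
      rw [hMapp, adj2, hglapp]
    have hMsym : ∀ v w, Ω (M v) w = Ω v (M w) := by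
      intro v w
      rw [hMg, hMr]
    have hMB : M * B = B * M := by
      ext v
      simp only [Module.End.mul_apply]
      apply hcancel
      intro w
      rw [hMr w (B v), hg v, ← hA, ← hg w, ← hMr (B w) v]
      exact hB w (M v)
    have hdm : Function.Bijective gl.dualMap := by
      have hfun : ⇑gl.dualMap = ⇑(g.dualMap) := by
        funext f
        ext x
        rw [LinearMap.dualMap_apply, LinearEquiv.dualMap_apply]
        rfl
      rw [hfun]
      exact (g.dualMap).bijective
    have hMbij : Function.Bijective M := by
      have hMfun : ⇑M = ⇑ι.symm ∘ ⇑gl.dualMap ∘ ⇑ι ∘ ⇑g := by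
        funext v
        rfl
      rw [hMfun]
      exact ι.symm.bijective.comp (hdm.comp (ι.bijective.comp g.bijective))
    obtain ⟨p, hp⟩ := exists_sqrt_poly M ((Module.End.isUnit_iff M).mpr hMbij)
    set S : Module.End ℂ V := aeval M p with hSdef
    have hS2 : S * S = M := by rw [← pow_two]; exact hp
    have hpowB : ∀ n : ℕ, M ^ n * B = B * M ^ n := by
      intro n
      induction n with
      | zero => simp
      | succ n ih => rw [pow_succ, mul_assoc, hMB, ← mul_assoc, ih, mul_assoc]
    have hcomm : ∀ q : ℂ[X], aeval M q * B = B * aeval M q := by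
      intro q
      induction q using Polynomial.induction_on' with
      | add f f' hf hf' => rw [map_add, add_mul, mul_add, hf, hf']
      | monomial n a =>
        rw [aeval_monomial, mul_assoc, hpowB n, ← mul_assoc, Algebra.commutes a B, mul_assoc]
    have hSB : S * B = B * S := hcomm p
    have hMcomm : ∀ n : ℕ, M * M ^ n = M ^ n * M := by
      intro n
      rw [← pow_succ', pow_succ]
    have hpowsym : ∀ (n : ℕ) (v w : V), Ω ((M ^ n) v) w = Ω v ((M ^ n) w) := by
      intro n
      induction n with
      | zero => simp
      | succ n ih =>
        intro v w
        rw [pow_succ]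
        simp only [Module.End.mul_apply]
        rw [ih (M v) w, hMsym]
        have h4 : M ((M ^ n) w) = (M ^ n) (M w) := by
          rw [← Module.End.mul_apply, hMcomm n, Module.End.mul_apply]
        rw [h4]
    have hsymq : ∀ q : ℂ[X], ∀ v w, Ω ((aeval M q) v) w = Ω v ((aeval M q) w) := by
      intro q
      induction q using Polynomial.induction_on' with
      | add f f' hf hf' =>
        intro v w
        simp only [map_add, LinearMap.add_apply]
        rw [hf, hf']
      | monomial n a =>
        intro v w
        rw [aeval_monomial]
        simp only [Module.End.mul_apply, Module.algebraMap_end_apply, map_smul,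
          LinearMap.smul_apply, map_smul]
        rw [hpowsym]
    have hSsym : ∀ v w, Ω (S v) w = Ω v (S w) := hsymq p
    have hSsurj : Function.Surjective S := by
      intro v
      obtain ⟨u, hu⟩ := hMbij.surjective v
      exact ⟨S u, by rw [← Module.End.mul_apply, hS2, hu]⟩
    have hSinj : Function.Injective S := LinearMap.injective_iff_surjective.mpr hSsurj
    have hSbij : Function.Bijective S := ⟨hSinj, hSsurj⟩
    set Se : V ≃ₗ[ℂ] V := LinearEquiv.ofBijective S hSbij with hSe
    have hSeapp : ∀ v, Se v = S v := fun v => rfl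
    have hSeS : ∀ v, S (Se.symm v) = v :=
      fun v => (hSeapp (Se.symm v)).symm.trans (Se.apply_symm_apply v)
    refine ⟨Se.symm ≪≫ₗ g, ?_, ?_⟩
    · intro v w
      show Ω (g (Se.symm v)) (g (Se.symm w)) = Ω v w
      rw [← hMg]
      have h1 : M (Se.symm v) = S v := by
        calc M (Se.symm v) = (S * S) (Se.symm v) := by rw [hS2]
          _ = S (S (Se.symm v)) := Module.End.mul_apply _ _ _
          _ = S v := by rw [hSeS]
      rw [h1, hSsym v (Se.symm w), hSeS w]
    · intro v
      show g (Se.symm (B v)) = A (g (Se.symm v))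
      have hc : Se.symm (B v) = B (Se.symm v) := by
        apply hSinj
        rw [hSeS]
        have h5 : S (B (Se.symm v)) = B (S (Se.symm v)) := by
          rw [← Module.End.mul_apply, hSB, Module.End.mul_apply]
        rw [h5, hSeS]
      rw [hc, hg]
  · rintro ⟨g, _, hg⟩
    exact ⟨g, hg⟩
end

section
/- Let V_n = ℂ² ⊗ ℂ[z]/(z^n) with the symplectic form (f̄₁, f̄₂) = Res_{z=0}((f₁,f₂)_T / z^n), where (·,·)_T is the ℂ[z]-bilinear extension of the standard symplectic form on T = ℂ². Then the Lie algebra of the stabilizer of multiplication by z in Sp(V_n) equals the truncated current algebra 𝔰𝔩₂[z]/z^n 𝔰𝔩₂[z], acting on V_n via the vector representation. -/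
open Polynomial

namespace Stab12

noncomputable abbrev Kk (n : ℕ) : Type := AdjoinRoot ((X : ℂ[X]) ^ n)
noncomputable abbrev zz (n : ℕ) : Kk n := AdjoinRoot.root _

lemma zz_pow_n (n : ℕ) : (zz n) ^ n = 0 := by
  rw [zz, ← AdjoinRoot.mk_X, ← map_pow, AdjoinRoot.mk_self]

lemma zz_pow_eq_zero {n m : ℕ} (h : n ≤ m) : (zz n) ^ m = 0 := by
  obtain ⟨k, rfl⟩ := Nat.exists_eq_add_of_le h
  rw [pow_add, zz_pow_n, zero_mul]

section
variable {n : ℕ}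

lemma res_pow (hn : 0 < n) (res : Kk n →ₗ[ℂ] ℂ)
    (hres : ∀ k < n, res ((zz n) ^ k) = if k = n - 1 then 1 else 0) (m : ℕ) : res ((zz n) ^ m) = if m = n - 1 then 1 else 0 := by
  by_cases h : m < n
  · exact hres m h
  · rw [zz_pow_eq_zero (le_of_not_gt h), map_zero, if_neg (by omega)]

lemma res_key (hn : 0 < n) (res : Kk n →ₗ[ℂ] ℂ)
    (hres : ∀ k < n, res ((zz n) ^ k) = if k = n - 1 then 1 else 0) (c : Kk n) (h : ∀ a : Kk n, res (a * c) = 0) : c = 0 := by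
  obtain ⟨p, rfl⟩ := AdjoinRoot.mk_surjective c
  set r : ℂ[X] := p %ₘ (X ^ n) with hr
  have hmk : (AdjoinRoot.mk ((X : ℂ[X]) ^ n)) p = (AdjoinRoot.mk ((X : ℂ[X]) ^ n)) r := by
    have hsplit : r + (X : ℂ[X]) ^ n * (p /ₘ (X ^ n)) = p :=
      Polynomial.modByMonic_add_div p (X ^ n)
    rw [← hsplit, map_add, map_mul, AdjoinRoot.mk_self, zero_mul, add_zero]
  have hdeg : r.natDegree < n := by
    by_cases h0 : r = 0
    · simpa [h0] using hn
    · have := Polynomial.degree_modByMonic_lt p (monic_X_pow (R := ℂ) n)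
      rw [degree_X_pow] at this
      exact (Polynomial.natDegree_lt_iff_degree_lt h0).2 this
  have hc : (AdjoinRoot.mk ((X : ℂ[X]) ^ n)) r
      = ∑ i ∈ Finset.range n, r.coeff i • (zz n) ^ i := by
    rw [← AdjoinRoot.aeval_eq]
    exact Polynomial.aeval_eq_sum_range' hdeg _
  have hcoeff : ∀ j < n, r.coeff j = 0 := by
    intro j hj
    have h1 := h ((zz n) ^ (n - 1 - j))
    rw [hmk, hc, Finset.mul_sum] at h1
    have h2 : ∀ i ∈ Finset.range n,
        res ((zz n) ^ (n - 1 - j) * r.coeff i • (zz n) ^ i)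
          = if i = j then r.coeff i else 0 := by
      intro i _
      rw [mul_smul_comm, map_smul, ← pow_add, res_pow hn res hres, smul_eq_mul]
      by_cases hij : i = j
      · rw [if_pos (by omega), hij, if_pos rfl, mul_one]
      · rw [if_neg (by omega), if_neg hij, mul_zero]
    rw [map_sum, Finset.sum_congr rfl h2, Finset.sum_ite_eq' (Finset.range n)] at h1
    simpa [Finset.mem_range.2 hj] using h1
  rw [hmk, hc]
  exact Finset.sum_eq_zero fun i hi => by
    rw [hcoeff i (Finset.mem_range.1 hi), zero_smul]

lemma klinear (ξ : (Fin 2 → Kk n) →ₗ[ℂ] (Fin 2 → Kk n))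
    (hroot : ∀ v, ξ (fun i => zz n * v i) = fun i => zz n * ξ v i)
    (r : Kk n) (v : Fin 2 → Kk n) :
    ξ (fun i => r * v i) = fun i => r * ξ v i := by
  obtain ⟨p, rfl⟩ := AdjoinRoot.mk_surjective r
  induction p using Polynomial.induction_on generalizing v with
  | C a =>
      have h1 : (fun i => (AdjoinRoot.mk ((X : ℂ[X]) ^ n)) (C a) * v i) = a • v := by
        funext i
        simp [AdjoinRoot.mk_C, Algebra.smul_def]
      rw [h1, map_smul]
      funext i
      simp [AdjoinRoot.mk_C, Algebra.smul_def]
  | add p q hp hq =>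
      have h1 : (fun i => (AdjoinRoot.mk ((X : ℂ[X]) ^ n)) (p + q) * v i)
          = (fun i => (AdjoinRoot.mk ((X : ℂ[X]) ^ n)) p * v i)
            + fun i => (AdjoinRoot.mk ((X : ℂ[X]) ^ n)) q * v i := by
        funext i; simp [add_mul]
      rw [h1, map_add, hp v, hq v]
      funext i; simp [add_mul]
  | monomial k a hk =>
      have hmul : ((AdjoinRoot.mk ((X : ℂ[X]) ^ n)) (C a * X ^ (k + 1)))
          = (AdjoinRoot.mk ((X : ℂ[X]) ^ n)) (C a * X ^ k) * zz n := by
        rw [zz, ← AdjoinRoot.mk_X, ← map_mul]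
        ring_nf
      have h1 : (fun i => (AdjoinRoot.mk ((X : ℂ[X]) ^ n)) (C a * X ^ (k + 1)) * v i)
          = fun i => (AdjoinRoot.mk ((X : ℂ[X]) ^ n)) (C a * X ^ k) * (zz n * v i) := by
        funext i; rw [hmul]; ring
      rw [h1, hk (fun i => zz n * v i), hroot v]
      funext i; rw [hmul]; ring

end
end Stab12

/-- Let `V_n = ℂ² ⊗ ℂ[z]/(z^n)` with the residue symplectic form
`(f̄₁, f̄₂) = Res_{z=0}((f₁,f₂)_T / z^n)`, where `(·,·)_T` is the `ℂ[z]`-bilinear extension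
of the standard symplectic form on `T = ℂ²`, and let `Bz` be multiplication by `z`.
Then the Lie algebra of the stabilizer of `Bz` in `Sp(V_n)`, i.e. the set of form-antisymmetric
`ℂ`-linear endomorphisms commuting with `Bz`, equals the truncated current algebra
`𝔰𝔩₂[z]/z^n𝔰𝔩₂[z]`, realized as the trace-free `2×2` matrices over `ℂ[z]/(z^n)` acting by
the vector representation. Here `ℂ[z]/(z^n)` is modelled as `AdjoinRoot (X^n)`, `res` is the
linear functional reading off the coefficient of `z^(n-1)`. -/
theorem stabilizer_of_z_is_truncated_sl2
    (n : ℕ) (hn : 0 < n)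
    (res : AdjoinRoot ((Polynomial.X : Polynomial ℂ) ^ n) →ₗ[ℂ] ℂ)
    (hres : ∀ k < n, res (AdjoinRoot.root ((Polynomial.X : Polynomial ℂ) ^ n) ^ k) =
      if k = n - 1 then 1 else 0)
    (Bz : (Fin 2 → AdjoinRoot ((Polynomial.X : Polynomial ℂ) ^ n)) →ₗ[ℂ]
          (Fin 2 → AdjoinRoot ((Polynomial.X : Polynomial ℂ) ^ n)))
    (hBz : ∀ v i, Bz v i = AdjoinRoot.root ((Polynomial.X : Polynomial ℂ) ^ n) * v i) :
    ∀ ξ : (Fin 2 → AdjoinRoot ((Polynomial.X : Polynomial ℂ) ^ n)) →ₗ[ℂ]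
          (Fin 2 → AdjoinRoot ((Polynomial.X : Polynomial ℂ) ^ n)),
      ((∀ v w, res ((ξ v) 0 * w 1 - (ξ v) 1 * w 0) =
          -(res (v 0 * (ξ w) 1 - v 1 * (ξ w) 0))) ∧ ξ ∘ₗ Bz = Bz ∘ₗ ξ) ↔
      (∃ M : Matrix (Fin 2) (Fin 2) (AdjoinRoot ((Polynomial.X : Polynomial ℂ) ^ n)),
        M.trace = 0 ∧ ∀ v, ξ v = M.mulVec v) := by
  intro ξ
  constructor
  · rintro ⟨hanti, hcomm⟩
    have hroot : ∀ v, ξ (fun i => Stab12.zz n * v i) = fun i => Stab12.zz n * ξ v i := by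
      intro v
      have h1 : (fun i => Stab12.zz n * v i) = Bz v := by funext i; rw [hBz]
      have h2 := LinearMap.congr_fun hcomm v
      simp only [LinearMap.comp_apply] at h2
      rw [h1, h2]
      funext i; rw [hBz]
    have hlin := Stab12.klinear ξ hroot
    set e : Fin 2 → (Fin 2 → Stab12.Kk n) := fun j => fun k => if k = j then 1 else 0 with he
    set M : Matrix (Fin 2) (Fin 2) (Stab12.Kk n) := Matrix.of (fun i j => ξ (e j) i) with hMdef
    have hM : ∀ v, ξ v = M.mulVec v := by
      intro v
      have hv : v = (fun i => v 0 * e 0 i) + (fun i => v 1 * e 1 i) := by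
        funext i; fin_cases i <;> simp [he]
      conv_lhs => rw [hv]
      rw [map_add, hlin (v 0) (e 0), hlin (v 1) (e 1)]
      funext i
      simp only [Pi.add_apply, Matrix.mulVec, dotProduct, Fin.sum_univ_two,
        hMdef, Matrix.of_apply]
      ring
    refine ⟨M, ?_, hM⟩
    rw [Matrix.trace_fin_two]
    apply Stab12.res_key hn res hres
    intro a
    have h := hanti (fun k => if k = 0 then a else 0) (e 1)
    rw [hM, hM] at h
    have hv1 : (M.mulVec (fun k => if k = 0 then a else 0)) 0 * (e 1) 1
        - (M.mulVec (fun k => if k = 0 then a else 0)) 1 * (e 1) 0 = M 0 0 * a := by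
      simp [Matrix.mulVec, dotProduct, Fin.sum_univ_two, he]
    have hv2 : (if (0 : Fin 2) = 0 then a else 0) * (M.mulVec (e 1)) 1
        - (if (1 : Fin 2) = 0 then a else 0) * (M.mulVec (e 1)) 0 = a * M 1 1 := by
      simp [Matrix.mulVec, dotProduct, Fin.sum_univ_two, he]
    rw [hv1, hv2] at h
    have : a * (M 0 0 + M 1 1) = M 0 0 * a + a * M 1 1 := by ring
    rw [this, map_add, h]
    ring
  · rintro ⟨M, htr, hM⟩
    have htr2 : M 0 0 + M 1 1 = 0 := by rw [← Matrix.trace_fin_two]; exact htr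
    constructor
    · intro v w
      have key : ((ξ v) 0 * w 1 - (ξ v) 1 * w 0) + (v 0 * (ξ w) 1 - v 1 * (ξ w) 0) = 0 := by
        rw [hM, hM]
        simp only [Matrix.mulVec, dotProduct, Fin.sum_univ_two]
        linear_combination (v 0 * w 1 - v 1 * w 0) * htr2
      exact eq_neg_of_add_eq_zero_left (by rw [← map_add, key, map_zero])
    · apply LinearMap.ext
      intro v
      simp only [LinearMap.comp_apply]
      funext i
      rw [hBz, hM, hM]
      simp only [Matrix.mulVec, dotProduct, Fin.sum_univ_two, hBz]
      ring
end

section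
/- Let T = ℂ², n ≥ 1, 𝔤_n = 𝔰𝔩₂[z]/z^n𝔰𝔩₂[z] acting on 𝒱_n = Hom(ℂ^r, T ⊗ ℂ[z]/(z^n)) (r ≥ 2), and let x ∈ 𝒱_n with x₀ (the constant coefficient of x) of rank 1. Let ξ ∈ 𝔤_n^x be an element of the stabilizer whose minimal degree m_x is minimal among all elements of 𝔤_n^x. Then 𝔤_n^x = ℂ[z]·ξ; in particular dim 𝔤_n^x = n - m_x. -/
open Polynomial

noncomputable def zz (n : ℕ) : AdjoinRoot ((X : ℂ[X])^n) := AdjoinRoot.root _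

lemma zz_pow_mk (n k : ℕ) : (zz n)^k = AdjoinRoot.mk _ (X^k) := by
  rw [zz, ← AdjoinRoot.mk_X, map_pow]

lemma zz_pow_n (n : ℕ) : (zz n)^n = 0 := by rw [zz_pow_mk, AdjoinRoot.mk_self]

lemma zz_pow_ne (n k : ℕ) (hk : k < n) : (zz n)^k ≠ 0 := by
  rw [zz_pow_mk, Ne, AdjoinRoot.mk_eq_zero]
  intro h
  have := Polynomial.natDegree_le_of_dvd h (pow_ne_zero _ Polynomial.X_ne_zero)
  simp at this; omega

lemma zz_ann (n : ℕ) (k : ℕ) (hk : k ≤ n) (a : AdjoinRoot ((X : ℂ[X])^n))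
    (h : (zz n)^k * a = 0) : ∃ b, a = (zz n)^(n-k) * b := by
  obtain ⟨g, rfl⟩ := AdjoinRoot.mk_surjective a
  rw [zz_pow_mk, ← map_mul, AdjoinRoot.mk_eq_zero] at h
  obtain ⟨q, hq⟩ := h
  have hx : (X:ℂ[X])^k ≠ 0 := pow_ne_zero _ Polynomial.X_ne_zero
  have h2 : (X:ℂ[X])^k * g = (X:ℂ[X])^k * ((X:ℂ[X])^(n-k) * q) := by
    rw [hq, ← mul_assoc, ← pow_add]
    congr 2
    omega
  have hg := mul_left_cancel₀ hx h2
  exact ⟨AdjoinRoot.mk _ q, by rw [zz_pow_mk, ← map_mul, ← hg]⟩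

noncomputable def eps (n : ℕ) (hn : 0 < n) : AdjoinRoot ((X : ℂ[X])^n) →ₐ[ℂ] ℂ :=
  AdjoinRoot.liftAlgHom _ (Algebra.ofId ℂ ℂ) 0 (by simp [hn.ne'])

lemma eps_mk (n : ℕ) (hn : 0 < n) (g : ℂ[X]) :
    eps n hn (AdjoinRoot.mk _ g) = g.coeff 0 := by
  rw [eps, AdjoinRoot.liftAlgHom_mk, Polynomial.coeff_zero_eq_eval_zero]
  simp [aeval_def, eval]

lemma eps_root_pow (n : ℕ) (hn : 0 < n) (k : ℕ) :
    eps n hn ((zz n)^k) = if k = 0 then 1 else 0 := by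
  rw [zz_pow_mk, eps_mk]
  rcases Nat.eq_zero_or_pos k with h | h
  · simp [h]
  · rw [coeff_X_pow, if_neg (by omega), if_neg (by omega)]

lemma eps_alg (n : ℕ) (hn : 0 < n) (c : ℂ) : eps n hn (algebraMap ℂ _ c) = c := by
  simp [eps]

lemma zz_top_mul (n : ℕ) (hn : 0 < n) (b : AdjoinRoot ((X : ℂ[X])^n)) :
    (zz n)^(n-1) * b = (eps n hn b) • (zz n)^(n-1) := by
  obtain ⟨g, rfl⟩ := AdjoinRoot.mk_surjective b
  obtain ⟨h, hh⟩ := Polynomial.X_dvd_iff.mpr (by simp : (g - C (g.coeff 0)).coeff 0 = 0)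
  have hg : g = C (g.coeff 0) + X * h := by rw [← hh]; ring
  rw [eps_mk, hg]
  rw [map_add, map_mul, mul_add, AdjoinRoot.mk_X]
  have h0 : (zz n)^(n-1) * ((zz n) * AdjoinRoot.mk _ h) = 0 := by
    rw [← mul_assoc, ← pow_succ]
    have : n - 1 + 1 = n := by omega
    rw [this, zz_pow_n, zero_mul]
  rw [show AdjoinRoot.root ((X:ℂ[X])^n) = zz n from rfl, h0, add_zero, Algebra.smul_def, mul_comm]
  have hc : (C (g.coeff 0) + X * h).coeff 0 = g.coeff 0 := by simp [coeff_C]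
  rw [hc]
  congr 1

lemma eps_zero_of_top_mul (n : ℕ) (hn : 0 < n) (b : AdjoinRoot ((X : ℂ[X])^n))
    (h : (zz n)^(n-1) * b = 0) : eps n hn b = 0 := by
  rw [zz_top_mul n hn] at h
  rcases smul_eq_zero.mp h with h | h
  · exact h
  · exact absurd h (zz_pow_ne n (n-1) (by omega))

lemma eps_of (n : ℕ) (hn : 0 < n) (c : ℂ) : eps n hn (AdjoinRoot.of _ c) = c := by
  rw [← AdjoinRoot.algebraMap_eq, eps_alg]

lemma zz_single (n : ℕ) (hn : 0 < n) (a : AdjoinRoot ((X : ℂ[X])^n)) (h : zz n * a = 0) :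
    ∃ c : ℂ, a = c • (zz n)^(n-1) := by
  obtain ⟨b, rfl⟩ := zz_ann n 1 hn a (by rw [pow_one]; exact h)
  exact ⟨eps n hn b, (zz_top_mul n hn b).symm ▸ rfl⟩

lemma top_alg_zero (n : ℕ) (hn : 0 < n) (c : ℂ)
    (h : (zz n)^(n-1) * algebraMap ℂ _ c = 0) : c = 0 := by
  have := eps_zero_of_top_mul n hn _ h
  rwa [eps_alg] at this

noncomputable def pb (n : ℕ) (hn : 0 < n) : PowerBasis ℂ (AdjoinRoot ((X : ℂ[X])^n)) :=
  AdjoinRoot.powerBasis (pow_ne_zero _ Polynomial.X_ne_zero)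

lemma pb_dim (n : ℕ) (hn : 0 < n) : (pb n hn).dim = n := by
  simp [pb, AdjoinRoot.powerBasis]

lemma pb_gen (n : ℕ) (hn : 0 < n) : (pb n hn).gen = zz n := by
  simp [pb, AdjoinRoot.powerBasis, zz]

lemma finrank_R (n : ℕ) (hn : 0 < n) :
    Module.finrank ℂ (AdjoinRoot ((X : ℂ[X])^n)) = n := by
  rw [(pb n hn).finrank, pb_dim]

noncomputable def Lm (n m : ℕ) :
    AdjoinRoot ((X : ℂ[X])^n) →ₗ[ℂ] AdjoinRoot ((X : ℂ[X])^n) :=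
  LinearMap.mulLeft ℂ ((zz n)^m)

lemma Lm_range (n : ℕ) (hn : 0 < n) (m : ℕ) (hm : m ≤ n) :
    Module.finrank ℂ (LinearMap.range (Lm n m)) = n - m := by
  classical
  set b := (pb n hn).basis with hb
  have hbi : ∀ i : Fin (pb n hn).dim, b i = (zz n)^(i:ℕ) := by
    intro i; rw [hb, (pb n hn).basis_eq_pow, pb_gen]
  have hrange : LinearMap.range (Lm n m)
      = Submodule.span ℂ (Set.range (fun i : Fin (n - m) => (zz n)^(m + (i:ℕ)))) := by
    apply le_antisymm
    · rw [LinearMap.range_eq_map, ← b.span_eq, Submodule.map_span]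
      rw [Submodule.span_le]
      rintro _ ⟨_, ⟨i, rfl⟩, rfl⟩
      have : Lm n m (b i) = (zz n)^(m + (i:ℕ)) := by
        rw [hbi, Lm, LinearMap.mulLeft_apply, ← pow_add]
      rw [this]
      by_cases hi : (i:ℕ) < n - m
      · exact Submodule.subset_span ⟨⟨i, hi⟩, rfl⟩
      · have hlt : (i:ℕ) < n := lt_of_lt_of_eq i.isLt (pb_dim n hn)
        have h1 : (zz n)^(m + (i:ℕ)) = (zz n)^n * (zz n)^(m + (i:ℕ) - n) := by
          rw [← pow_add]; congr 1; omega
        rw [h1, zz_pow_n, zero_mul]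
        exact Submodule.zero_mem _
    · rw [Submodule.span_le]
      rintro _ ⟨i, rfl⟩
      exact ⟨(zz n)^(i:ℕ), by rw [Lm, LinearMap.mulLeft_apply, ← pow_add]⟩
  rw [hrange]
  have hli : LinearIndependent ℂ (fun i : Fin (n - m) => (zz n)^(m + (i:ℕ))) := by
    have hinj : Function.Injective (fun i : Fin (n - m) =>
        (⟨m + (i:ℕ), by rw [pb_dim]; omega⟩ : Fin (pb n hn).dim)) := by
      intro i j hij
      simpa [Fin.ext_iff] using hij
    have := b.linearIndependent.comp _ hinj
    convert this using 1
    · funext i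
      simp [Function.comp, hbi]
    · rfl
  rw [finrank_span_eq_card hli]
  simp

lemma ann_of (n : ℕ) (hn : 0 < n) (m : ℕ) (hm : m < n)
    (a p : AdjoinRoot ((X : ℂ[X])^n))
    (h1 : (zz n)^(n-m-1) * a ≠ 0) (h2 : (zz n)^(n-m) * a = 0) (h3 : p * a = 0) :
    ∃ q, p = (zz n)^(n-m) * q := by
  obtain ⟨g, rfl⟩ := AdjoinRoot.mk_surjective a
  obtain ⟨q₀, rfl⟩ := AdjoinRoot.mk_surjective p
  rw [zz_pow_mk, ← map_mul, AdjoinRoot.mk_eq_zero] at h2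
  rw [zz_pow_mk, ← map_mul, Ne, AdjoinRoot.mk_eq_zero] at h1
  rw [← map_mul, AdjoinRoot.mk_eq_zero] at h3
  -- X^m ∣ g
  obtain ⟨u, hu⟩ := h2
  have hgt : g = X^m * u := by
    have hc : (X:ℂ[X])^(n-m) * g = (X:ℂ[X])^(n-m) * (X^m * u) := by
      rw [hu, ← mul_assoc, ← pow_add]; congr 2; omega
    exact mul_left_cancel₀ (pow_ne_zero _ Polynomial.X_ne_zero) hc
  -- ¬ X ∣ u
  have hXu : ¬ (X : ℂ[X]) ∣ u := by
    rintro ⟨w, rfl⟩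
    apply h1
    refine ⟨w, ?_⟩
    have e : (X:ℂ[X])^((n-m-1) + (m+1)) = (X:ℂ[X])^n := by
      rw [show (n-m-1)+(m+1) = n by omega]
    rw [hgt, ← e, pow_add, pow_add, pow_one]
    ring
  -- X^(n-m) ∣ q₀
  obtain ⟨t, ht⟩ := h3
  have hdvd : (X:ℂ[X])^(n-m) ∣ u * q₀ := by
    refine ⟨t, ?_⟩
    have hc : (X:ℂ[X])^m * (u * q₀) = (X:ℂ[X])^m * ((X:ℂ[X])^(n-m) * t) := by
      have e : (X:ℂ[X])^(m + (n-m)) = (X:ℂ[X])^n := by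
        rw [show m + (n-m) = n by omega]
      calc (X:ℂ[X])^m * (u * q₀) = q₀ * g := by rw [hgt]; ring
        _ = (X:ℂ[X])^n * t := ht
        _ = (X:ℂ[X])^m * ((X:ℂ[X])^(n-m) * t) := by rw [← e, pow_add]; ring
    exact mul_left_cancel₀ (pow_ne_zero _ Polynomial.X_ne_zero) hc
  have := (Polynomial.prime_X (R := ℂ)).pow_dvd_of_dvd_mul_left (n - m) hXu hdvd
  obtain ⟨w, hw⟩ := this
  exact ⟨AdjoinRoot.mk _ w, by rw [zz_pow_mk, ← map_mul, ← hw]⟩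

-- matrix auxiliary lemmas

lemma mat_entry_eq {l r : ℕ} {α : Type*} {M N : Matrix (Fin l) (Fin r) α}
    (h : M = N) (i : Fin l) (j : Fin r) : M i j = N i j := by rw [h]

lemma extract_mat (n : ℕ) (hn : 0 < n) {l r : ℕ}
    (M : Matrix (Fin l) (Fin r) (AdjoinRoot ((X : ℂ[X])^n)))
    (h : zz n • M = 0) :
    ∃ A : Matrix (Fin l) (Fin r) ℂ,
      M = (zz n)^(n-1) • (A.map (algebraMap ℂ (AdjoinRoot ((X : ℂ[X])^n)))) := by
  have he : ∀ i j, zz n * M i j = 0 := by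
    intro i j
    have := mat_entry_eq h i j
    simpa using this
  choose c hc using fun i j => zz_single n hn (M i j) (he i j)
  refine ⟨Matrix.of c, ?_⟩
  ext i j
  rw [Matrix.smul_apply, Matrix.map_apply, Matrix.of_apply, hc i j, Algebra.smul_def,
    smul_eq_mul, mul_comm]

lemma trace_map_alg (n : ℕ) {l : ℕ} (A : Matrix (Fin l) (Fin l) ℂ) :
    (A.map (algebraMap ℂ (AdjoinRoot ((X : ℂ[X])^n)))).trace
      = algebraMap ℂ _ A.trace := by
  simp [Matrix.trace, Matrix.diag, map_sum]

lemma smul_map_alg (n : ℕ) {l r : ℕ} (c : ℂ) (A : Matrix (Fin l) (Fin r) ℂ) :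
    ((c • A).map (algebraMap ℂ (AdjoinRoot ((X : ℂ[X])^n))))
      = algebraMap ℂ (AdjoinRoot ((X : ℂ[X])^n)) c • (A.map (algebraMap ℂ (AdjoinRoot ((X : ℂ[X])^n)))) := by
  ext i j
  simp [Algebra.smul_def]

lemma sub_map_alg (n : ℕ) {l r : ℕ} (A B : Matrix (Fin l) (Fin r) ℂ) :
    ((A - B).map (algebraMap ℂ (AdjoinRoot ((X : ℂ[X])^n))))
      = A.map (algebraMap ℂ _) - B.map (algebraMap ℂ _) := by
  ext i j
  simp

lemma extract_trace (n : ℕ) (hn : 0 < n) {l : ℕ}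
    (M : Matrix (Fin l) (Fin l) (AdjoinRoot ((X : ℂ[X])^n)))
    (A : Matrix (Fin l) (Fin l) ℂ)
    (hMA : M = (zz n)^(n-1) • (A.map (algebraMap ℂ (AdjoinRoot ((X : ℂ[X])^n)))))
    (ht : M.trace = 0) : A.trace = 0 := by
  rw [hMA, Matrix.trace_smul, trace_map_alg, smul_eq_mul] at ht
  exact top_alg_zero n hn _ ht

lemma extract_ann (n : ℕ) (hn : 0 < n) {l r : ℕ}
    (M : Matrix (Fin 2) (Fin l) (AdjoinRoot ((X : ℂ[X])^n)))
    (A : Matrix (Fin 2) (Fin l) ℂ)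
    (x : Matrix (Fin l) (Fin r) (AdjoinRoot ((X : ℂ[X])^n)))
    (hMA : M = (zz n)^(n-1) • (A.map (algebraMap ℂ (AdjoinRoot ((X : ℂ[X])^n)))))
    (ha : M * x = 0) : A * (x.map (eps n hn)) = 0 := by
  rw [hMA, Matrix.smul_mul] at ha
  ext i j
  have h1 : (zz n)^(n-1) * ((A.map (algebraMap ℂ (AdjoinRoot ((X : ℂ[X])^n))) * x) i j) = 0 := by
    have := mat_entry_eq ha i j
    simpa using this
  have h2 := eps_zero_of_top_mul n hn _ h1
  rw [Matrix.mul_apply, map_sum] at h2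
  rw [Matrix.mul_apply, Matrix.zero_apply]
  rw [← h2]
  apply Finset.sum_congr rfl
  intro k _
  simp [Matrix.map_apply, map_mul, eps_alg n hn, eps_of n hn]


lemma param_trace_free (v : Fin 2 → ℂ) (A : Matrix (Fin 2) (Fin 2) ℂ)
    (hv : v ≠ 0) (hAv : A.mulVec v = 0) (htA : A.trace = 0) :
    ∃ s : ℂ, A = s • Matrix.of ![![-(v 0 * v 1), v 0 ^ 2], ![-(v 1 ^ 2), v 0 * v 1]] := by
  have e0 : A 0 0 * v 0 + A 0 1 * v 1 = 0 := by
    have := congrFun hAv 0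
    simpa [Matrix.mulVec, dotProduct, Fin.sum_univ_two] using this
  have e1 : A 1 0 * v 0 + A 1 1 * v 1 = 0 := by
    have := congrFun hAv 1
    simpa [Matrix.mulVec, dotProduct, Fin.sum_univ_two] using this
  have e2 : A 0 0 + A 1 1 = 0 := by
    simpa [Matrix.trace, Fin.sum_univ_two] using htA
  by_cases h0 : v 0 = 0
  · have h1 : v 1 ≠ 0 := by
      intro h1; apply hv; funext i; fin_cases i <;> simp [h0, h1]
    refine ⟨-(A 1 0) / v 1 ^ 2, ?_⟩
    have hA01 : A 0 1 = 0 := by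
      rw [h0, mul_zero, zero_add] at e0
      exact (mul_eq_zero.mp e0).resolve_right h1
    have hA11 : A 1 1 = 0 := by
      rw [h0, mul_zero, zero_add] at e1
      exact (mul_eq_zero.mp e1).resolve_right h1
    have hA00 : A 0 0 = 0 := by linear_combination e2 - hA11
    funext i j
    fin_cases i <;> fin_cases j
    · simp [hA00, h0]
    · simp [hA01, h0]
    · show A 1 0 = _ ; simp only [Matrix.smul_apply, Matrix.of_apply]
      simp only [Fin.mk_one, Fin.zero_eta, Matrix.cons_val_one, Matrix.cons_val_zero, Matrix.head_cons, smul_eq_mul]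
      field_simp
    · simp [hA11, h0]
  · refine ⟨A 0 1 / v 0 ^ 2, ?_⟩
    funext i j
    fin_cases i <;> fin_cases j <;>
      simp only [Matrix.smul_apply, Matrix.of_apply, Matrix.cons_val', Matrix.cons_val_zero,
        Matrix.cons_val_one, Matrix.head_cons, Matrix.empty_val', Matrix.cons_val_fin_one,
        Matrix.head_fin_const, smul_eq_mul, Fin.mk_one, Fin.zero_eta] <;> field_simp
    · linear_combination e0
    · linear_combination v 0 * e1 + v 1 * e0 - v 0 * v 1 * e2
    · linear_combination v 0 * e2 - e0

lemma rank1_prop {r : ℕ} (x0 : Matrix (Fin 2) (Fin r) ℂ) (hx : x0.rank = 1)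
    (A B : Matrix (Fin 2) (Fin 2) ℂ) (htA : A.trace = 0) (htB : B.trace = 0)
    (hA : A * x0 = 0) (hB : B * x0 = 0) (hBne : B ≠ 0) : ∃ c : ℂ, A = c • B := by
  have hbot : LinearMap.range x0.mulVecLin ≠ ⊥ := by
    intro h
    rw [Matrix.rank, h] at hx
    simp at hx
  obtain ⟨v, hvmem, hvne⟩ := Submodule.exists_mem_ne_zero_of_ne_bot hbot
  obtain ⟨u, hu⟩ := hvmem
  have hAv : A.mulVec v = 0 := by
    rw [← hu]
    show A.mulVec (x0.mulVec u) = 0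
    rw [Matrix.mulVec_mulVec, hA]
    simp
  have hBv : B.mulVec v = 0 := by
    rw [← hu]
    show B.mulVec (x0.mulVec u) = 0
    rw [Matrix.mulVec_mulVec, hB]
    simp
  obtain ⟨s, hs⟩ := param_trace_free v A hvne hAv htA
  obtain ⟨t, ht⟩ := param_trace_free v B hvne hBv htB
  have htne : t ≠ 0 := by
    rintro rfl; rw [zero_smul] at ht; exact hBne ht
  refine ⟨s / t, ?_⟩
  rw [hs, ht, smul_smul, div_mul_cancel₀ _ htne]

set_option maxHeartbeats 1000000 in
/-- Let `𝔤_n = 𝔰𝔩₂[z]/z^n𝔰𝔩₂[z]` act on `𝒱_n = Hom(ℂ^r, T ⊗ ℂ[z]/(z^n))`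
(`T = ℂ²`, `r ≥ 2`), realized as trace-free `2×2` matrices acting by left multiplication on
`2×r` matrices over `R = ℂ[z]/(z^n)` (modelled as `AdjoinRoot (X^n)`). Let `x ∈ 𝒱_n` whose
constant coefficient `x₀` has rank 1, and let `ξ ∈ 𝔤_n^x` with minimal degree `m_x`, minimal
among all elements of the stabilizer `𝔤_n^x = {η | η x = 0}`. (Here `min.deg η ≥ m` iff
`z^{n-m}·η = 0`.) Then `𝔤_n^x = ℂ[z]·ξ`; in particular `dim 𝔤_n^x = n - m_x`. -/
theorem stabilizer_cyclic_rank_one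
    (n : ℕ) (hn : 0 < n) (r : ℕ) (hr : 2 ≤ r)
    (c0 : AdjoinRoot ((Polynomial.X : Polynomial ℂ) ^ n) →ₗ[ℂ] ℂ)
    (hc0 : ∀ k < n, c0 (AdjoinRoot.root ((Polynomial.X : Polynomial ℂ) ^ n) ^ k) =
      if k = 0 then 1 else 0)
    (x : Matrix (Fin 2) (Fin r) (AdjoinRoot ((Polynomial.X : Polynomial ℂ) ^ n)))
    (hx : (x.map ⇑c0).rank = 1)
    (ξ : Matrix (Fin 2) (Fin 2) (AdjoinRoot ((Polynomial.X : Polynomial ℂ) ^ n)))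
    (m_x : ℕ) (hm : m_x ≤ n)
    (hξtrace : ξ.trace = 0) (hξann : ξ * x = 0)
    (hξdeg : (AdjoinRoot.root ((Polynomial.X : Polynomial ℂ) ^ n)) ^ (n - m_x) • ξ = 0)
    (hξdeg' : ∀ m ≤ n,
      (AdjoinRoot.root ((Polynomial.X : Polynomial ℂ) ^ n)) ^ (n - m) • ξ = 0 → m ≤ m_x)
    (hmin : ∀ η : Matrix (Fin 2) (Fin 2) (AdjoinRoot ((Polynomial.X : Polynomial ℂ) ^ n)),
      η.trace = 0 → η * x = 0 →
      (AdjoinRoot.root ((Polynomial.X : Polynomial ℂ) ^ n)) ^ (n - m_x) • η = 0) :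
    (∀ η : Matrix (Fin 2) (Fin 2) (AdjoinRoot ((Polynomial.X : Polynomial ℂ) ^ n)),
      (η.trace = 0 ∧ η * x = 0) ↔
      ∃ p : AdjoinRoot ((Polynomial.X : Polynomial ℂ) ^ n), η = p • ξ) ∧
    Module.finrank ℂ ↥(Submodule.span ℂ
      {η : Matrix (Fin 2) (Fin 2) (AdjoinRoot ((Polynomial.X : Polynomial ℂ) ^ n)) |
        η.trace = 0 ∧ η * x = 0}) = n - m_x := by
  classical
  have hroot : AdjoinRoot.root ((X : ℂ[X])^n) = zz n := rfl
  rw [hroot] at hξdeg hξdeg' hmin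
  -- c0 = eps
  have hc0eps : ⇑c0 = ⇑(eps n hn) := by
    have : c0 = (eps n hn).toLinearMap := by
      apply (pb n hn).basis.ext
      intro i
      have hilt : (i : ℕ) < n := lt_of_lt_of_eq i.isLt (pb_dim n hn)
      rw [(pb n hn).basis_eq_pow, pb_gen]
      rw [show (zz n) = AdjoinRoot.root ((X : ℂ[X])^n) from rfl]
      rw [hc0 _ hilt]
      rw [AlgHom.toLinearMap_apply, show AdjoinRoot.root ((X : ℂ[X])^n) = zz n from rfl,
        eps_root_pow]
    rw [this]; rfl
  have hx' : ((x.map (eps n hn)).rank : ℕ) = 1 := by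
    rw [show x.map ⇑(eps n hn) = x.map ⇑c0 by rw [hc0eps]]
    exact hx
  rcases eq_or_lt_of_le hm with hmeq | hmlt
  · -- degenerate case m_x = n
    have hnm0 : n - m_x = 0 := by omega
    rw [hnm0] at hmin hξdeg
    have hstab0 : ∀ η : Matrix (Fin 2) (Fin 2) (AdjoinRoot ((X : ℂ[X])^n)),
        η.trace = 0 → η * x = 0 → η = 0 := by
      intro η h1 h2
      have := hmin η h1 h2
      simpa using this
    have hξ0 : ξ = 0 := hstab0 ξ hξtrace hξann
    constructor
    · intro η
      constructor
      · rintro ⟨h1, h2⟩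
        exact ⟨0, by rw [hstab0 η h1 h2, zero_smul]⟩
      · rintro ⟨p, rfl⟩
        rw [hξ0, smul_zero]
        exact ⟨by simp, by simp⟩
    · have hset : {η : Matrix (Fin 2) (Fin 2) (AdjoinRoot ((X : ℂ[X])^n)) |
          η.trace = 0 ∧ η * x = 0} = {0} := by
        ext η
        simp only [Set.mem_setOf_eq, Set.mem_singleton_iff]
        constructor
        · rintro ⟨h1, h2⟩; exact hstab0 η h1 h2
        · rintro rfl; exact ⟨by simp, by simp⟩
      rw [hset, Submodule.span_zero_singleton]
      rw [show n - m_x = 0 from hnm0]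
      simp
  · -- main case m_x < n
    -- leading coefficient of ξ
    have hMne : (zz n)^(n - m_x - 1) • ξ ≠ 0 := by
      intro h0
      have := hξdeg' (m_x + 1) (by omega) (by
        rw [show n - (m_x + 1) = n - m_x - 1 by omega]; exact h0)
      omega
    have hMkill : zz n • ((zz n)^(n - m_x - 1) • ξ) = 0 := by
      rw [smul_smul, ← pow_succ']
      rw [show n - m_x - 1 + 1 = n - m_x by omega]
      exact hξdeg
    obtain ⟨B, hB⟩ := extract_mat n hn _ hMkill
    have htB : B.trace = 0 := by
      apply extract_trace n hn _ _ hB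
      rw [Matrix.trace_smul, hξtrace, smul_zero]
    have haB : B * (x.map (eps n hn)) = 0 := by
      apply extract_ann n hn _ _ _ hB
      rw [Matrix.smul_mul, hξann, smul_zero]
    have hBne : B ≠ 0 := by
      rintro rfl
      apply hMne
      rw [hB]
      ext i j
      simp
    -- main induction
    have key : ∀ k : ℕ, ∀ η : Matrix (Fin 2) (Fin 2) (AdjoinRoot ((X : ℂ[X])^n)),
        η.trace = 0 → η * x = 0 → (zz n)^k • η = 0 →
        ∃ p : AdjoinRoot ((X : ℂ[X])^n), η = p • ξ := by
      intro k
      induction k with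
      | zero =>
        intro η _ _ h
        rw [pow_zero, one_smul] at h
        exact ⟨0, by rw [h, zero_smul]⟩
      | succ k ih =>
        intro η ht ha hk1
        by_cases h : (zz n)^k • η = 0
        · exact ih η ht ha h
        · have hkn : k < n - m_x := by
            by_contra hge
            push_neg at hge
            apply h
            have : (zz n)^k • η = (zz n)^(k - (n - m_x)) • ((zz n)^(n - m_x) • η) := by
              rw [smul_smul, ← pow_add]
              congr 2
              omega
            rw [this, hmin η ht ha, smul_zero]
          have hk1' : zz n • ((zz n)^k • η) = 0 := by
            rw [smul_smul, ← pow_succ']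
            exact hk1
          obtain ⟨A, hA⟩ := extract_mat n hn _ hk1'
          have htA : A.trace = 0 := by
            apply extract_trace n hn _ _ hA
            rw [Matrix.trace_smul, ht, smul_zero]
          have haA : A * (x.map (eps n hn)) = 0 := by
            apply extract_ann n hn _ _ _ hA
            rw [Matrix.smul_mul, ha, smul_zero]
          obtain ⟨c, hc⟩ := rank1_prop (x.map (eps n hn)) hx' A B htA htB haA haB hBne
          set e := n - 1 - k - m_x with he
          set q := algebraMap ℂ (AdjoinRoot ((X : ℂ[X])^n)) c * (zz n)^e with hq
          have hke : k + e = n - m_x - 1 := by omega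
          have hABmap : (A.map (algebraMap ℂ (AdjoinRoot ((X : ℂ[X])^n))))
              - algebraMap ℂ (AdjoinRoot ((X : ℂ[X])^n)) c •
                (B.map (algebraMap ℂ (AdjoinRoot ((X : ℂ[X])^n))))
              = (0 : Matrix (Fin 2) (Fin 2) (AdjoinRoot ((X : ℂ[X])^n))) := by
            rw [← smul_map_alg, ← sub_map_alg, hc, sub_self]
            ext i j; simp
          have hstep : (zz n)^k • (η - q • ξ) = 0 := by
            rw [smul_sub, hA, smul_smul, hq]
            rw [show (zz n)^k * (algebraMap ℂ (AdjoinRoot ((X : ℂ[X])^n)) c * (zz n)^e)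
              = algebraMap ℂ (AdjoinRoot ((X : ℂ[X])^n)) c * (zz n)^(k+e) by
                rw [pow_add]; ring]
            rw [hke, mul_smul, hB, smul_comm, ← smul_sub, hABmap, smul_zero]
          have ht' : (η - q • ξ).trace = 0 := by
            rw [Matrix.trace_sub, Matrix.trace_smul, ht, hξtrace, smul_zero, sub_zero]
          have ha' : (η - q • ξ) * x = 0 := by
            rw [Matrix.sub_mul, Matrix.smul_mul, hξann, ha, smul_zero, sub_zero]
          obtain ⟨p, hp⟩ := ih _ ht' ha' hstep
          refine ⟨p + q, ?_⟩
          rw [add_smul, ← hp, sub_add_cancel]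
    constructor
    · intro η
      constructor
      · rintro ⟨h1, h2⟩
        exact key n η h1 h2 (by rw [zz_pow_n, zero_smul])
      · rintro ⟨p, rfl⟩
        refine ⟨by rw [Matrix.trace_smul, hξtrace, smul_zero], ?_⟩
        rw [Matrix.smul_mul, hξann, smul_zero]
    · -- dimension count
      haveI : Module.Finite ℂ (AdjoinRoot ((X : ℂ[X])^n)) := (pb n hn).finite
      let φ : AdjoinRoot ((X : ℂ[X])^n) →ₗ[ℂ]
          Matrix (Fin 2) (Fin 2) (AdjoinRoot ((X : ℂ[X])^n)) :=
        { toFun := fun p => p • ξ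
          map_add' := fun p q => add_smul p q ξ
          map_smul' := fun c p => smul_assoc c p ξ }
      have hspan : Submodule.span ℂ
          {η : Matrix (Fin 2) (Fin 2) (AdjoinRoot ((X : ℂ[X])^n)) |
            η.trace = 0 ∧ η * x = 0} = LinearMap.range φ := by
        have hset : {η : Matrix (Fin 2) (Fin 2) (AdjoinRoot ((X : ℂ[X])^n)) |
            η.trace = 0 ∧ η * x = 0} = Set.range φ := by
          ext η
          simp only [Set.mem_setOf_eq, Set.mem_range]
          constructor
          · rintro ⟨h1, h2⟩
            obtain ⟨p, hp⟩ := key n η h1 h2 (by rw [zz_pow_n, zero_smul])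
            exact ⟨p, hp.symm⟩
          · rintro ⟨p, rfl⟩
            exact ⟨by rw [show φ p = p • ξ from rfl, Matrix.trace_smul, hξtrace, smul_zero],
              by rw [show φ p = p • ξ from rfl, Matrix.smul_mul, hξann, smul_zero]⟩
        rw [hset, ← LinearMap.coe_range, Submodule.span_eq]
      rw [hspan]
      -- kernel of φ
      obtain ⟨i, j, hij⟩ : ∃ i j, (zz n)^(n - m_x - 1) * ξ i j ≠ 0 := by
        by_contra hcon
        push_neg at hcon
        apply hMne
        ext i j
        simpa using hcon i j
      have hker : LinearMap.ker φ = LinearMap.range (Lm n (n - m_x)) := by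
        apply le_antisymm
        · intro p hp
          have hpξ : p • ξ = 0 := hp
          have h3 : p * ξ i j = 0 := by
            have := mat_entry_eq hpξ i j
            simpa using this
          have h2 : (zz n)^(n - m_x) * ξ i j = 0 := by
            have := mat_entry_eq hξdeg i j
            simpa using this
          have h1 : (zz n)^(n - m_x - 1) * ξ i j ≠ 0 := hij
          obtain ⟨w, hw⟩ := ann_of n hn m_x hmlt (ξ i j) p h1 h2 h3
          exact ⟨w, hw.symm⟩
        · rintro _ ⟨w, rfl⟩
          rw [LinearMap.mem_ker]
          show ((zz n)^(n - m_x) * w) • ξ = 0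
          rw [mul_comm, mul_smul, hξdeg, smul_zero]
      have hrk := LinearMap.finrank_range_add_finrank_ker φ
      rw [hker, finrank_R n hn, Lm_range n hn (n - m_x) (by omega)] at hrk
      omega
end
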